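/- Let Ω ⊂ E_k be a domain and let Φ : Ω → A_n^m have decomposition Φ(ζ) = Σ_{r=1}^n U_r(x_1,...,x_k) I_r with each U_r ℝ-differentiable on Ω_ℝ. Then Φ is monogenic in Ω (i.e., Gateaux differentiable with derivative Φ'(ζ) ∈ A_n^m in the sense that lim_{ε→0+} (Φ(ζ+εh)−Φ(ζ))/ε = h·Φ'(ζ) for all h ∈ E_k) if and only if the Cauchy–Riemann conditions ∂Φ/∂x_j = (∂Φ/∂x_1)·e_j hold in Ω for all j = 2,...,k. -/

import Mathlib

open Filter Topology

/-- a function `Φ(ζ) = ∑_r U_r(x) I_r` with ℝ-differentiable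
components is monogenic in `Ω` (continuous and Gateaux differentiable, with
`lim_{ε→0+} ε⁻¹(Φ(ζ+εh) - Φ(ζ)) = h Φ'(ζ)` for all `h ∈ E_k`) if and only if
the Cauchy–Riemann conditions `∂Φ/∂x_j = (∂Φ/∂x_1) e_j` hold. -/
theorem monogenic_iff_CR {n m k : ℕ} [NeZero k]
    (A : Type*) [NormedCommRing A] [NormedAlgebra ℂ A]
    (I : Module.Basis (Fin n) ℂ A)
    (e : Fin k → A) (he0 : e 0 = 1)
    (hone : (1 : A) = ∑ r ∈ Finset.univ.filter (fun r : Fin n => (r : ℕ) < m), I r)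
    (hli : ∀ x : Fin k → ℝ, ∑ j, (x j : ℂ) • e j = 0 → x = 0)
    (Ωℝ : Set (Fin k → ℝ)) (hΩo : IsOpen Ωℝ) (hΩc : IsConnected Ωℝ)
    (Φ : A → A) (U : Fin n → (Fin k → ℝ) → ℂ)
    (hU : ∀ x ∈ Ωℝ, Φ (∑ j, (x j : ℂ) • e j) = ∑ r, U r x • I r)
    (hUdiff : ∀ r : Fin n, DifferentiableOn ℝ (U r) Ωℝ) :
    (ContinuousOn Φ ((fun x : Fin k → ℝ => ∑ j, (x j : ℂ) • e j) '' Ωℝ) ∧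
      ∀ ζ ∈ (fun x : Fin k → ℝ => ∑ j, (x j : ℂ) • e j) '' Ωℝ,
        ∃ d : A, ∀ h ∈ {h : A | ∃ x : Fin k → ℝ, h = ∑ j, (x j : ℂ) • e j},
          Tendsto (fun ε : ℝ => ((ε : ℂ))⁻¹ • (Φ (ζ + (ε : ℂ) • h) - Φ ζ))
            (𝓝[>] (0 : ℝ)) (𝓝 (h * d))) ↔
    (∀ x ∈ Ωℝ, ∀ j : Fin k,
      (∑ r, fderiv ℝ (U r) x (Pi.single j 1) • I r) =
        (∑ r, fderiv ℝ (U r) x (Pi.single 0 1) • I r) * e j) := by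
  classical
  set T : (Fin k → ℝ) →ₗ[ℝ] A :=
    { toFun := fun x => ∑ j, (x j : ℂ) • e j
      map_add' := by intro a b; simp [add_smul, Finset.sum_add_distrib]
      map_smul' := by
        intro c a
        simp only [Pi.smul_apply, smul_eq_mul, Complex.ofReal_mul, RingHom.id_apply,
          Finset.smul_sum, mul_smul, Complex.coe_smul] } with hT
  have hTfun : ∀ x : Fin k → ℝ, T x = ∑ j, (x j : ℂ) • e j := fun _ => rfl
  have hTe : ∀ j : Fin k, T (Pi.single j 1) = e j := by
    intro j
    simp only [hTfun]
    rw [Finset.sum_eq_single j]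
    · simp
    · intro i _ hij; simp [Pi.single_apply, hij]
    · simp
  -- key limit lemma
  have key : ∀ x ∈ Ωℝ, ∀ y : Fin k → ℝ,
      Tendsto (fun ε : ℝ => ((ε : ℂ))⁻¹ • (Φ (T x + (ε : ℂ) • T y) - Φ (T x)))
        (𝓝[>] (0 : ℝ)) (𝓝 (∑ r, (fderiv ℝ (U r) x y : ℂ) • I r)) := by
    intro x hx y
    have hmem : ∀ᶠ ε : ℝ in 𝓝[>] (0 : ℝ), x + ε • y ∈ Ωℝ := by
      have hcont : Tendsto (fun ε : ℝ => x + ε • y) (𝓝 0) (𝓝 x) := by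
        have h1 : Tendsto (fun ε : ℝ => ε • y) (𝓝 (0:ℝ)) (𝓝 ((0:ℝ) • y)) :=
          (continuous_id.smul continuous_const).tendsto 0
        simpa using tendsto_const_nhds.add h1
      exact nhdsWithin_le_nhds (hcont (hΩo.mem_nhds hx))
    have heq : ∀ᶠ ε : ℝ in 𝓝[>] (0 : ℝ),
        (∑ r, (ε⁻¹ • (U r (x + ε • y) - U r x)) • I r)
          = ((ε : ℂ))⁻¹ • (Φ (T x + (ε : ℂ) • T y) - Φ (T x)) := by
      filter_upwards [hmem] with ε hε
      have h1 : T x + (ε : ℂ) • T y = T (x + ε • y) := by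
        rw [map_add, map_smul, Complex.coe_smul]
      rw [h1, hTfun, hTfun, hU _ hε, hU _ hx, ← Finset.sum_sub_distrib, Finset.smul_sum]
      refine Finset.sum_congr rfl fun r _ => ?_
      rw [← sub_smul, smul_smul, Complex.real_smul, Complex.ofReal_inv]
    refine Tendsto.congr' heq ?_
    refine tendsto_finset_sum _ fun r _ => Tendsto.smul_const ?_ (I r)
    have hdiff : HasFDerivAt (U r) (fderiv ℝ (U r) x) x :=
      ((hUdiff r x hx).differentiableAt (hΩo.mem_nhds hx)).hasFDerivAt
    exact (hdiff.hasLineDerivAt y).tendsto_slope_zero_right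
  -- injectivity and embedding
  have hTinj : Function.Injective T := by
    intro a b hab
    have h0 : T (a - b) = 0 := by rw [map_sub, hab, sub_self]
    have := hli (a - b) h0
    exact sub_eq_zero.mp this
  have hemb : Topology.IsClosedEmbedding T :=
    LinearMap.isClosedEmbedding_of_injective (LinearMap.ker_eq_bot.mpr hTinj)
  -- continuity of Φ on the image
  have hcontΦ : ContinuousOn Φ (T '' Ωℝ) := by
    rintro ζ ⟨x, hx, rfl⟩
    have hmap : 𝓝[T '' Ωℝ] (T x) = Filter.map T (𝓝[Ωℝ] x) :=
      (hemb.isEmbedding.map_nhdsWithin_eq Ωℝ x).symm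
    rw [ContinuousWithinAt, hmap, tendsto_map'_iff]
    have hG : Tendsto (fun x' => ∑ r, U r x' • I r) (𝓝[Ωℝ] x) (𝓝 (∑ r, U r x • I r)) := by
      refine tendsto_finset_sum _ fun r _ => Tendsto.smul_const ?_ (I r)
      exact (hUdiff r).continuousOn x hx
    have hΦx : Φ (T x) = ∑ r, U r x • I r := hU x hx
    rw [hΦx]
    refine Tendsto.congr' ?_ hG
    filter_upwards [eventually_mem_nhdsWithin] with x' hx'
    exact (hU x' hx').symm
  constructor
  · rintro ⟨-, hdiffble⟩ x hx j
    obtain ⟨d, hd⟩ := hdiffble (T x) ⟨x, hx, rfl⟩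
    have hj := hd (e j) ⟨Pi.single j 1, (hTe j).symm⟩
    have hk := key x hx (Pi.single j 1)
    rw [hTe j] at hk
    have huniq : (∑ r, (fderiv ℝ (U r) x (Pi.single j 1) : ℂ) • I r) = e j * d :=
      tendsto_nhds_unique hk hj
    have h0 := hd (e 0) ⟨Pi.single 0 1, (hTe 0).symm⟩
    have hk0 := key x hx (Pi.single 0 1)
    rw [hTe 0] at hk0
    have huniq0 : (∑ r, (fderiv ℝ (U r) x (Pi.single 0 1) : ℂ) • I r) = e 0 * d :=
      tendsto_nhds_unique hk0 h0
    rw [huniq, huniq0, he0, one_mul, mul_comm]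
  · intro hCR
    refine ⟨hcontΦ, ?_⟩
    rintro ζ ⟨x, hx, rfl⟩
    refine ⟨∑ r, fderiv ℝ (U r) x (Pi.single 0 1) • I r, ?_⟩
    rintro h ⟨y, rfl⟩
    have hk := key x hx y
    have hy : y = ∑ j, y j • (Pi.single j 1 : Fin k → ℝ) := by
      ext i; simp [Finset.sum_apply, Pi.single_apply]
    have hder : ∀ r, fderiv ℝ (U r) x y
        = ∑ j, y j • fderiv ℝ (U r) x (Pi.single j 1) := by
      intro r
      conv_lhs => rw [hy]
      rw [map_sum]
      simp only [map_smul, smul_eq_mul]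
    have hsum : (∑ r, (fderiv ℝ (U r) x y : ℂ) • I r)
        = (∑ j, (y j : ℂ) • e j) * (∑ r, fderiv ℝ (U r) x (Pi.single 0 1) • I r) := by
      calc (∑ r, (fderiv ℝ (U r) x y : ℂ) • I r)
          = ∑ r, ∑ j, (y j • fderiv ℝ (U r) x (Pi.single j 1)) • I r := by
            refine Finset.sum_congr rfl fun r _ => ?_
            rw [hder r, Finset.sum_smul]
        _ = ∑ j, (y j : ℂ) • ∑ r, fderiv ℝ (U r) x (Pi.single j 1) • I r := by
            rw [Finset.sum_comm]
            refine Finset.sum_congr rfl fun j _ => ?_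
            rw [Finset.smul_sum]
            refine Finset.sum_congr rfl fun r _ => ?_
            rw [smul_assoc, Complex.coe_smul]
        _ = ∑ j, (y j : ℂ) • ((∑ r, fderiv ℝ (U r) x (Pi.single 0 1) • I r) * e j) := by
            refine Finset.sum_congr rfl fun j _ => ?_
            rw [hCR x hx j]
        _ = (∑ j, (y j : ℂ) • e j) * (∑ r, fderiv ℝ (U r) x (Pi.single 0 1) • I r) := by
            rw [Finset.sum_mul]
            refine Finset.sum_congr rfl fun j _ => ?_
            rw [smul_mul_assoc, mul_comm]
    rw [← hsum]
    exact hk
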